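/- Let q > 0, 0 < a₂ < a₁, 0 < b₂ < b₁, and suppose there exists N ∈ ℕ₀ with (a₁)_n (b₁)_n ≤ q (a₂)_n (b₂)_n for some n. If for some m ∈ ℕ₀ one has (a₁)_m (b₁)_m ≥ q (a₂)_m (b₂)_m, then for all n > m one has (a₁)_n (b₁)_n > q (a₂)_n (b₂)_n. -/
import Mathlib


open Real Set MeasureTheory

/-- Pochhammer symbol (rising factorial) for a real argument. -/
noncomputable def poch (x : ℝ) (n : ℕ) : ℝ := ∏ i ∈ Finset.range n, (x + i)

/-- Gauss hypergeometric series. -/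
noncomputable def hyperF (a b c z : ℝ) : ℝ :=
  ∑' n : ℕ, poch a n * poch b n / (poch c n * (n.factorial : ℝ)) * z ^ n

lemma poch_pos' {x : ℝ} (hx : 0 < x) (n : ℕ) : 0 < poch x n :=
  Finset.prod_pos fun i _ => by positivity

lemma poch_succ' (x : ℝ) (n : ℕ) : poch x (n + 1) = poch x n * (x + n) :=
  Finset.prod_range_succ _ _

theorem poch_cross (q a₁ a₂ b₁ b₂ : ℝ) (hq : 0 < q) (ha₂ : 0 < a₂) (ha : a₂ < a₁)
    (hb₂ : 0 < b₂) (hb : b₂ < b₁)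
    (hex : ∃ n : ℕ, poch a₁ n * poch b₁ n ≤ q * (poch a₂ n * poch b₂ n))
    (m : ℕ) (hm : q * (poch a₂ m * poch b₂ m) ≤ poch a₁ m * poch b₁ m) :
    ∀ n : ℕ, m < n → q * (poch a₂ n * poch b₂ n) < poch a₁ n * poch b₁ n := by
  have ha₁ : 0 < a₁ := ha₂.trans ha
  have hb₁ : 0 < b₁ := hb₂.trans hb
  have step : ∀ k : ℕ, q * (poch a₂ k * poch b₂ k) ≤ poch a₁ k * poch b₁ k →
      q * (poch a₂ (k + 1) * poch b₂ (k + 1)) < poch a₁ (k + 1) * poch b₁ (k + 1) := by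
    intro k h
    have p1 : 0 < poch a₁ k := poch_pos' ha₁ k
    have p2 : 0 < poch b₁ k := poch_pos' hb₁ k
    rw [poch_succ', poch_succ', poch_succ', poch_succ']
    calc q * (poch a₂ k * (a₂ + k) * (poch b₂ k * (b₂ + k)))
        = q * (poch a₂ k * poch b₂ k) * ((a₂ + k) * (b₂ + k)) := by ring
      _ ≤ poch a₁ k * poch b₁ k * ((a₂ + k) * (b₂ + k)) := by
          apply mul_le_mul_of_nonneg_right h; positivity
      _ < poch a₁ k * poch b₁ k * ((a₁ + k) * (b₁ + k)) := by
          apply mul_lt_mul_of_pos_left _ (by positivity)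
          apply mul_lt_mul'' (by linarith) (by linarith) (by positivity) (by positivity)
      _ = poch a₁ k * (a₁ + k) * (poch b₁ k * (b₁ + k)) := by ring
  intro n hn
  induction n with
  | zero => omega
  | succ n ih =>
    rcases Nat.lt_succ_iff_lt_or_eq.mp hn with h | rfl
    · exact step n (ih h).le
    · exact step m hm
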